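/- The zero-truncated Poisson mixture model is identifiable: if Q and G are probability measures on (0,∞) with ∫ λ^x/(x!(e^λ−1)) dQ(λ) = ∫ λ^x/(x!(e^λ−1)) dG(λ) for every integer x ≥ 1, then Q = G. -/

import Mathlib

open MeasureTheory Real ENNReal NNReal

namespace TruncPoisson

lemma exp_sub_one_pos {l : ℝ} (hl : 0 < l) : 0 < Real.exp l - 1 := by
  have := Real.add_one_le_exp l; linarith

lemma pow_le_exp_aux (k : ℕ) {x : ℝ} (hx : 0 ≤ x) : x ^ k ≤ k.factorial * Real.exp x := by
  have h1 : x ^ k / k.factorial ≤ Real.exp x := by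
    calc x ^ k / k.factorial ≤ ∑ i ∈ Finset.range (k+1), x ^ i / i.factorial := by
          exact Finset.single_le_sum (f := fun i => x ^ i / (i.factorial : ℝ))
            (fun i _ => by positivity) (Finset.self_mem_range_succ k)
      _ ≤ Real.exp x := Real.sum_le_exp_of_nonneg hx _
  have hk : (0:ℝ) < k.factorial := by exact_mod_cast k.factorial_pos
  calc x ^ k = k.factorial * (x ^ k / k.factorial) := by field_simp
    _ ≤ k.factorial * Real.exp x := by
        exact mul_le_mul_of_nonneg_left h1 hk.le

lemma exp_sub_one_ge {l : ℝ} (hl : 0 < l) :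
    l / 2 * Real.exp (l / 2) ≤ Real.exp l - 1 := by
  have h1 : l / 2 + 1 ≤ Real.exp (l / 2) := Real.add_one_le_exp _
  have h2 : Real.exp (l/2) * Real.exp (l/2) = Real.exp l := by
    rw [← Real.exp_add]; ring_nf
  nlinarith [Real.exp_pos (l/2)]

lemma w_le_aux {l : ℝ} (hl : 0 < l) : l / (Real.exp l - 1) ≤ 2 * Real.exp (-(l/2)) := by
  have h0 := exp_sub_one_pos hl
  rw [div_le_iff₀ h0]
  have h1 := exp_sub_one_ge hl
  have h2 : l = 2 * Real.exp (-(l/2)) * (l/2 * Real.exp (l/2)) := by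
    have : Real.exp (-(l/2)) * Real.exp (l/2) = 1 := by
      rw [← Real.exp_add]; simp
    nlinarith [this]
  calc l = 2 * Real.exp (-(l/2)) * (l/2 * Real.exp (l/2)) := h2
    _ ≤ 2 * Real.exp (-(l/2)) * (Real.exp l - 1) := by
        apply mul_le_mul_of_nonneg_left h1; positivity

/-- The master bound: for `l > 0` and `c ≤ 1/4`,
`l^k * exp (c*l) * (l/(e^l-1)) ≤ 2 * k! * 4^k`. -/
lemma master_bound (k : ℕ) {l : ℝ} (hl : 0 < l) {c : ℝ} (hc : c ≤ 1/4) :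
    l ^ k * Real.exp (c * l) * (l / (Real.exp l - 1)) ≤ 2 * k.factorial * 4 ^ k := by
  have h1 : l ^ k ≤ k.factorial * 4 ^ k * Real.exp (l/4) := by
    have := pow_le_exp_aux k (x := l/4) (by linarith)
    calc l ^ k = 4 ^ k * (l/4) ^ k := by rw [← mul_pow]; ring_nf
      _ ≤ 4 ^ k * (k.factorial * Real.exp (l/4)) := by
          apply mul_le_mul_of_nonneg_left this; positivity
      _ = k.factorial * 4 ^ k * Real.exp (l/4) := by ring
  have h2 : Real.exp (c * l) ≤ Real.exp (l/4) := by
    apply Real.exp_le_exp.mpr; nlinarith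
  have h3 := w_le_aux hl
  have hw0 : 0 ≤ l / (Real.exp l - 1) := le_of_lt (by
    apply div_pos hl (exp_sub_one_pos hl))
  have hfac : (0:ℝ) ≤ (k.factorial : ℝ) := Nat.cast_nonneg _
  have hA : (0:ℝ) ≤ (k.factorial : ℝ) * 4 ^ k * Real.exp (l/4) * Real.exp (l/4) := by
    apply mul_nonneg (mul_nonneg (mul_nonneg hfac (by norm_num)) (Real.exp_pos _).le)
      (Real.exp_pos _).le
  have key : l ^ k * Real.exp (c * l) * (l / (Real.exp l - 1)) ≤
      ((k.factorial : ℝ) * 4 ^ k * Real.exp (l/4) * Real.exp (l/4)) * (2 * Real.exp (-(l/2))) := by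
    calc l ^ k * Real.exp (c * l) * (l / (Real.exp l - 1))
        ≤ l ^ k * Real.exp (l/4) * (l / (Real.exp l - 1)) := by
          apply mul_le_mul_of_nonneg_right _ hw0
          exact mul_le_mul_of_nonneg_left h2 (pow_nonneg hl.le k)
      _ ≤ ((k.factorial : ℝ) * 4 ^ k * Real.exp (l/4)) * Real.exp (l/4)
            * (l / (Real.exp l - 1)) := by
          apply mul_le_mul_of_nonneg_right _ hw0
          exact mul_le_mul_of_nonneg_right h1 (Real.exp_pos _).le
      _ ≤ ((k.factorial : ℝ) * 4 ^ k * Real.exp (l/4) * Real.exp (l/4))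
            * (2 * Real.exp (-(l/2))) := mul_le_mul_of_nonneg_left h3 hA
  have he : Real.exp (l/4) * Real.exp (l/4) * Real.exp (-(l/2)) = 1 := by
    rw [← Real.exp_add, ← Real.exp_add]; ring_nf; exact Real.exp_zero
  calc l ^ k * Real.exp (c * l) * (l / (Real.exp l - 1))
      ≤ ((k.factorial : ℝ) * 4 ^ k * Real.exp (l/4) * Real.exp (l/4))
          * (2 * Real.exp (-(l/2))) := key
    _ = 2 * k.factorial * 4 ^ k * (Real.exp (l/4) * Real.exp (l/4) * Real.exp (-(l/2))) := by
        ring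
    _ = 2 * k.factorial * 4 ^ k := by rw [he, mul_one]

lemma real_exp_tsum (x : ℝ) : Real.exp x = ∑' n : ℕ, x ^ n / n.factorial := by
  rw [Real.exp_eq_exp_ℝ, NormedSpace.exp_eq_tsum_div]



lemma cont_aux (c : ℝ) (m : ℕ) : Continuous (fun l : ℝ => l ^ m * Real.exp (c * l)) :=
  (continuous_pow m).mul (Real.continuous_exp.comp (continuous_const.mul continuous_id))

/-- Expansion of the Laplace transform at `s + 1/4` as a series in data at `s`. -/
lemma expand (μ : Measure ℝ) [IsFiniteMeasure μ] (hpos : ∀ᵐ l ∂μ, 0 < l)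
    (hfin : ∀ k : ℕ, ∫⁻ l, ENNReal.ofReal (l ^ k * Real.exp (l / 4)) ∂μ ≠ ∞)
    (s : ℝ) (hs : 0 ≤ s) (k : ℕ) :
    ∫ l, l ^ k * Real.exp (-(s + 4⁻¹) * l) ∂μ
      = ∑' j : ℕ, ∫ l, ((-4⁻¹ : ℝ) ^ j / j.factorial) * (l ^ (k + j) * Real.exp (-s * l)) ∂μ := by
  set f : ℕ → ℝ → ℝ :=
    fun j l => ((-4⁻¹ : ℝ) ^ j / j.factorial) * (l ^ (k + j) * Real.exp (-s * l)) with hf_def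
  have hfc : ∀ j, Continuous (f j) := fun j => continuous_const.mul (cont_aux (-s) (k + j))
  have hpt : ∀ l : ℝ, l ^ k * Real.exp (-(s + 4⁻¹) * l) = ∑' j : ℕ, f j l := by
    intro l
    have h1 : ∀ j : ℕ, f j l
        = (l ^ k * Real.exp (-s * l)) * ((-(l / 4)) ^ j / j.factorial) := by
      intro j
      simp only [hf_def]
      rw [show (-(l / 4) : ℝ) = -4⁻¹ * l by ring, mul_pow, pow_add]
      ring
    rw [tsum_congr h1, _root_.tsum_mul_left, ← real_exp_tsum (-(l / 4)), mul_assoc,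
      ← Real.exp_add]
    congr 2
    ring
  have hsum_b : ∀ l : ℝ, Summable (fun j : ℕ =>
      (l ^ k * Real.exp (-s * l)) * ((l / 4) ^ j / j.factorial)) := fun l =>
    (Real.summable_pow_div_factorial (l / 4)).mul_left _
  have habs : ∀ l : ℝ, 0 < l → (∑' j : ℕ, (‖f j l‖₊ : ℝ≥0∞))
      ≤ ENNReal.ofReal (l ^ k * Real.exp (l / 4)) := by
    intro l hl
    have hb : ∀ j : ℕ, (‖f j l‖₊ : ℝ≥0∞)
        = ENNReal.ofReal ((l ^ k * Real.exp (-s * l)) * ((l / 4) ^ j / j.factorial)) := by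
      intro j
      rw [← enorm_eq_nnnorm, ← ofReal_norm]
      congr 1
      have : f j l = (l ^ k * Real.exp (-s * l)) * ((-(l / 4)) ^ j / j.factorial) := by
        simp only [hf_def]
        rw [show (-(l / 4) : ℝ) = -4⁻¹ * l by ring, mul_pow, pow_add]
        ring
      rw [this, Real.norm_eq_abs, abs_mul, abs_div, abs_pow, abs_neg,
        abs_of_pos (div_pos hl (by norm_num)),
        abs_of_pos (mul_pos (pow_pos hl k) (Real.exp_pos _)),
        Nat.abs_cast]
    rw [tsum_congr hb, ← ENNReal.ofReal_tsum_of_nonneg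
      (fun j => by positivity) (hsum_b l)]
    apply ENNReal.ofReal_le_ofReal
    rw [_root_.tsum_mul_left, ← real_exp_tsum (l / 4)]
    have h2 : Real.exp (-s * l) ≤ 1 := by
      rw [Real.exp_le_one_iff]
      nlinarith
    calc l ^ k * Real.exp (-s * l) * Real.exp (l / 4)
        ≤ l ^ k * 1 * Real.exp (l / 4) := by
          apply mul_le_mul_of_nonneg_right _ (Real.exp_pos _).le
          exact mul_le_mul_of_nonneg_left h2 (pow_nonneg hl.le k)
      _ = l ^ k * Real.exp (l / 4) := by ring
  have hf' : (∑' j : ℕ, ∫⁻ l, (‖f j l‖₊ : ℝ≥0∞) ∂μ) ≠ ∞ := by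
    rw [← lintegral_tsum (fun j => ((hfc j).measurable.nnnorm.coe_nnreal_ennreal).aemeasurable)]
    refine ne_top_of_le_ne_top (hfin k) (lintegral_mono_ae ?_)
    filter_upwards [hpos] with l hl using habs l hl
  calc ∫ l, l ^ k * Real.exp (-(s + 4⁻¹) * l) ∂μ
      = ∫ l, ∑' j : ℕ, f j l ∂μ := by
        congr 1; funext l; exact hpt l
    _ = ∑' j : ℕ, ∫ l, f j l ∂μ :=
        integral_tsum (fun j => (hfc j).aestronglyMeasurable) hf'

/-- The induction ladder: equality of all weighted moments propagates along `s = n/4`. -/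
lemma ladder (μ ν : Measure ℝ) [IsFiniteMeasure μ] [IsFiniteMeasure ν]
    (hposμ : ∀ᵐ l ∂μ, 0 < l) (hposν : ∀ᵐ l ∂ν, 0 < l)
    (hfinμ : ∀ k : ℕ, ∫⁻ l, ENNReal.ofReal (l ^ k * Real.exp (l / 4)) ∂μ ≠ ∞)
    (hfinν : ∀ k : ℕ, ∫⁻ l, ENNReal.ofReal (l ^ k * Real.exp (l / 4)) ∂ν ≠ ∞)
    (hmom : ∀ k : ℕ, ∫ l, l ^ k ∂μ = ∫ l, l ^ k ∂ν) :
    ∀ n k : ℕ, ∫ l, l ^ k * Real.exp (-((n : ℝ) / 4) * l) ∂μ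
      = ∫ l, l ^ k * Real.exp (-((n : ℝ) / 4) * l) ∂ν := by
  intro n
  induction n with
  | zero =>
      intro k
      simp only [Nat.cast_zero, zero_div, neg_zero, zero_mul, Real.exp_zero, mul_one]
      exact hmom k
  | succ n ih =>
      intro k
      have hcast : -(((n + 1 : ℕ) : ℝ) / 4) = -(((n : ℝ) / 4) + 4⁻¹) := by
        push_cast; ring
      rw [hcast, expand μ hposμ hfinμ ((n : ℝ) / 4) (by positivity) k,
        expand ν hposν hfinν ((n : ℝ) / 4) (by positivity) k]
      exact tsum_congr fun j => by rw [integral_const_mul, integral_const_mul, ih (k + j)]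

/-- Finite measures supported on `[0,1]` with equal moments are equal
(Hausdorff moment problem via Weierstrass approximation). -/
lemma hausdorff_moment (m m' : Measure ℝ) [IsFiniteMeasure m] [IsFiniteMeasure m']
    (hm : m (Set.Icc (0:ℝ) 1)ᶜ = 0) (hm' : m' (Set.Icc (0:ℝ) 1)ᶜ = 0)
    (h : ∀ n : ℕ, ∫ t, t ^ n ∂m = ∫ t, t ^ n ∂m') : m = m' := by
  have hae : ∀ᵐ t ∂m, t ∈ Set.Icc (0:ℝ) 1 := by
    have : {t : ℝ | ¬ t ∈ Set.Icc (0:ℝ) 1} = (Set.Icc (0:ℝ) 1)ᶜ := rfl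
    rw [MeasureTheory.ae_iff, this, hm]
  have hae' : ∀ᵐ t ∂m', t ∈ Set.Icc (0:ℝ) 1 := by
    have : {t : ℝ | ¬ t ∈ Set.Icc (0:ℝ) 1} = (Set.Icc (0:ℝ) 1)ᶜ := rfl
    rw [MeasureTheory.ae_iff, this, hm']
  -- integrability of powers and polynomials
  have hint : ∀ (μ₀ : Measure ℝ) (_ : IsFiniteMeasure μ₀)
      (_ : ∀ᵐ t ∂μ₀, t ∈ Set.Icc (0:ℝ) 1) (n : ℕ),
      Integrable (fun t : ℝ => t ^ n) μ₀ := by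
    intro μ₀ hfin hae₀ n
    refine Integrable.mono' (integrable_const 1) (continuous_pow n).aestronglyMeasurable ?_
    filter_upwards [hae₀] with t ht
    rw [Real.norm_eq_abs, abs_pow]
    calc |t| ^ n ≤ 1 ^ n := by
          apply pow_le_pow_left₀ (abs_nonneg t)
          rw [abs_le]; constructor <;> linarith [ht.1, ht.2]
      _ = 1 := one_pow n
  have hintp : ∀ (μ₀ : Measure ℝ) (_ : IsFiniteMeasure μ₀)
      (_ : ∀ᵐ t ∂μ₀, t ∈ Set.Icc (0:ℝ) 1) (p : Polynomial ℝ),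
      Integrable (fun t : ℝ => p.eval t) μ₀ := by
    intro μ₀ hfin hae₀ p
    have : (fun t : ℝ => p.eval t)
        = fun t : ℝ => ∑ i ∈ Finset.range (p.natDegree + 1), p.coeff i * t ^ i := by
      funext t; exact Polynomial.eval_eq_sum_range t
    rw [this]
    exact integrable_finset_sum _ fun i _ => (hint μ₀ hfin hae₀ i).const_mul _
  -- polynomials integrate equally
  have hpoly : ∀ p : Polynomial ℝ, ∫ t, p.eval t ∂m = ∫ t, p.eval t ∂m' := by
    intro p
    have hev : ∀ (μ₀ : Measure ℝ) (_ : IsFiniteMeasure μ₀)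
        (_ : ∀ᵐ t ∂μ₀, t ∈ Set.Icc (0:ℝ) 1), ∫ t, p.eval t ∂μ₀
        = ∑ i ∈ Finset.range (p.natDegree + 1), p.coeff i * ∫ t, t ^ i ∂μ₀ := by
      intro μ₀ hfin hae₀
      have : ∫ t, p.eval t ∂μ₀
          = ∫ t, ∑ i ∈ Finset.range (p.natDegree + 1), p.coeff i * t ^ i ∂μ₀ := by
        congr 1; funext t; exact Polynomial.eval_eq_sum_range t
      rw [this, integral_finset_sum _ fun i _ => (hint μ₀ hfin hae₀ i).const_mul _]
      exact Finset.sum_congr rfl fun i _ => integral_const_mul _ _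
    rw [hev m ‹_› hae, hev m' ‹_› hae']
    exact Finset.sum_congr rfl fun i _ => by rw [h i]
  -- bounded continuous functions integrate equally
  have hbc : ∀ (F : ℝ → ℝ), Continuous F → (∃ B : ℝ, ∀ t, ‖F t‖ ≤ B) →
      ∫ t, F t ∂m = ∫ t, F t ∂m' := by
    intro F hFc ⟨B, hB⟩
    have hFint : Integrable F m :=
      Integrable.mono' (integrable_const B) hFc.aestronglyMeasurable
        (Filter.Eventually.of_forall hB)
    have hFint' : Integrable F m' :=
      Integrable.mono' (integrable_const B) hFc.aestronglyMeasurable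
        (Filter.Eventually.of_forall hB)
    set K : ℝ := (m Set.univ).toReal + (m' Set.univ).toReal + 1 with hK
    have hKpos : 0 < K := by positivity
    have key : ∀ ε : ℝ, 0 < ε → |∫ t, F t ∂m - ∫ t, F t ∂m'| ≤ ε := by
      intro ε hε
      obtain ⟨p, hp⟩ := exists_polynomial_near_of_continuousOn 0 1 F
        hFc.continuousOn (ε / K) (by positivity)
      have hd : ∀ (μ₀ : Measure ℝ) (_ : IsFiniteMeasure μ₀)
          (_ : ∀ᵐ t ∂μ₀, t ∈ Set.Icc (0:ℝ) 1) (_ : Integrable F μ₀),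
          ‖∫ t, F t ∂μ₀ - ∫ t, p.eval t ∂μ₀‖ ≤ ε / K * (μ₀ Set.univ).toReal := by
        intro μ₀ hfin hae₀ hFi
        rw [← integral_sub hFi (hintp μ₀ hfin hae₀ p)]
        apply norm_integral_le_of_norm_le_const
        filter_upwards [hae₀] with t ht
        have := hp t ht
        rw [Real.norm_eq_abs, abs_sub_comm]
        linarith [le_of_lt this]
      have h1 := hd m ‹_› hae hFint
      have h2 := hd m' ‹_› hae' hFint'
      have h3 : ∫ t, F t ∂m - ∫ t, F t ∂m'
          = (∫ t, F t ∂m - ∫ t, p.eval t ∂m) - (∫ t, F t ∂m' - ∫ t, p.eval t ∂m') := by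
        rw [hpoly p]; ring
      rw [h3]
      calc |(∫ t, F t ∂m - ∫ t, p.eval t ∂m) - (∫ t, F t ∂m' - ∫ t, p.eval t ∂m')|
          ≤ |∫ t, F t ∂m - ∫ t, p.eval t ∂m| + |∫ t, F t ∂m' - ∫ t, p.eval t ∂m'| :=
            abs_sub _ _
        _ ≤ ε / K * (m Set.univ).toReal + ε / K * (m' Set.univ).toReal := by
            apply add_le_add h1 h2
        _ = ε / K * ((m Set.univ).toReal + (m' Set.univ).toReal) := by ring
        _ ≤ ε / K * K := by
            apply mul_le_mul_of_nonneg_left _ (by positivity)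
            have h4 : (0:ℝ) ≤ (m Set.univ).toReal := ENNReal.toReal_nonneg
            have h5 : (0:ℝ) ≤ (m' Set.univ).toReal := ENNReal.toReal_nonneg
            rw [hK]; linarith
        _ = ε := by field_simp
    have : |∫ t, F t ∂m - ∫ t, F t ∂m'| ≤ 0 := by
      refine le_of_forall_pos_le_add ?_
      intro ε hε
      simpa using key ε hε
    have := abs_nonpos_iff.mp this
    linarith [sub_eq_zero.mp this]
  -- conclude via bounded continuous `ℝ≥0`-valued functions
  apply ext_of_forall_lintegral_eq_of_IsFiniteMeasure
  intro f
  obtain ⟨C, hC⟩ := f.bounded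
  set F : ℝ → ℝ := fun t => (f t : ℝ) with hF
  have hFc : Continuous F := NNReal.continuous_coe.comp f.continuous
  have hFB : ∀ t, ‖F t‖ ≤ (f 0 : ℝ) + C := by
    intro t
    have h1 := hC t 0
    rw [NNReal.dist_eq] at h1
    have h2 : (f t : ℝ) - (f 0 : ℝ) ≤ C := le_trans (le_abs_self _) h1
    rw [Real.norm_eq_abs, abs_of_nonneg (f t).coe_nonneg]
    linarith
  have hintm : Integrable F m :=
    Integrable.mono' (integrable_const ((f 0 : ℝ) + C)) hFc.aestronglyMeasurable
      (Filter.Eventually.of_forall hFB)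
  have hintm' : Integrable F m' :=
    Integrable.mono' (integrable_const ((f 0 : ℝ) + C)) hFc.aestronglyMeasurable
      (Filter.Eventually.of_forall hFB)
  rw [lintegral_coe_eq_integral f hintm, lintegral_coe_eq_integral f hintm',
    hbc F hFc ⟨(f 0 : ℝ) + C, hFB⟩]
noncomputable def wnn : ℝ → ℝ≥0 := fun l => Real.toNNReal (l / (Real.exp l - 1))

lemma wnn_meas : Measurable wnn :=
  (measurable_id.div ((Real.measurable_exp).sub measurable_const)).real_toNNReal

lemma wnn_coe {l : ℝ} (hl : 0 < l) : (wnn l : ℝ) = l / (Real.exp l - 1) :=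
  Real.coe_toNNReal _ (le_of_lt (div_pos hl (exp_sub_one_pos hl)))

lemma wnn_pos {l : ℝ} (hl : 0 < l) : 0 < wnn l :=
  Real.toNNReal_pos.mpr (div_pos hl (exp_sub_one_pos hl))

section OneMeasure

variable (Q : Measure ℝ) [IsProbabilityMeasure Q] (hQ : Q (Set.Ioi (0:ℝ))ᶜ = 0)
include hQ

lemma aeQ_pos : ∀ᵐ l ∂Q, 0 < l := by
  rw [MeasureTheory.ae_iff]
  have : {l : ℝ | ¬ 0 < l} = (Set.Ioi (0:ℝ))ᶜ := by
    ext l; simp [Set.mem_Ioi]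
  rw [this, hQ]

lemma muQ_aepos : ∀ᵐ l ∂(Q.withDensity (fun l => (wnn l : ℝ≥0∞))), 0 < l := by
  rw [MeasureTheory.ae_iff]
  have : {l : ℝ | ¬ 0 < l} = (Set.Ioi (0:ℝ))ᶜ := by
    ext l; simp [Set.mem_Ioi]
  rw [this]
  exact withDensity_absolutelyContinuous Q _ hQ

lemma muQ_finite : IsFiniteMeasure (Q.withDensity (fun l => (wnn l : ℝ≥0∞))) := by
  constructor
  rw [withDensity_apply _ MeasurableSet.univ, Measure.restrict_univ]
  have hb : ∫⁻ l, ((wnn l : ℝ≥0∞)) ∂Q ≤ ∫⁻ _, (1 : ℝ≥0∞) ∂Q := by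
    apply lintegral_mono_ae
    filter_upwards [aeQ_pos Q hQ] with l hl
    have h1 : l / (Real.exp l - 1) ≤ 1 := by
      rw [div_le_one (exp_sub_one_pos hl)]
      have := Real.add_one_le_exp l; linarith
    have : (wnn l : ℝ≥0∞) = ENNReal.ofReal (l / (Real.exp l - 1)) := rfl
    rw [this, show (1 : ℝ≥0∞) = ENNReal.ofReal 1 by simp]
    exact ENNReal.ofReal_le_ofReal h1
  apply lt_of_le_of_lt hb
  simp [lintegral_one]

lemma muQ_hfin (k : ℕ) :
    ∫⁻ l, ENNReal.ofReal (l ^ k * Real.exp (l / 4))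
      ∂(Q.withDensity (fun l => (wnn l : ℝ≥0∞))) ≠ ⊤ := by
  have hmeas : Measurable fun l : ℝ => ENNReal.ofReal (l ^ k * Real.exp (l / 4)) :=
    ((continuous_pow k).mul
      (Real.continuous_exp.comp (continuous_id.div_const 4))).measurable.ennreal_ofReal
  rw [lintegral_withDensity_eq_lintegral_mul Q wnn_meas.coe_nnreal_ennreal hmeas]
  have hb : ∫⁻ l, ((fun l => (wnn l : ℝ≥0∞)) * fun l =>
      ENNReal.ofReal (l ^ k * Real.exp (l / 4))) l ∂Q
      ≤ ∫⁻ _, ENNReal.ofReal (2 * k.factorial * 4 ^ k) ∂Q := by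
    apply lintegral_mono_ae
    filter_upwards [aeQ_pos Q hQ] with l hl
    simp only [Pi.mul_apply]
    have h1 : (wnn l : ℝ≥0∞) = ENNReal.ofReal (l / (Real.exp l - 1)) := rfl
    rw [h1, ← ENNReal.ofReal_mul (le_of_lt (div_pos hl (exp_sub_one_pos hl)))]
    apply ENNReal.ofReal_le_ofReal
    have := master_bound k hl (c := 4⁻¹) (by norm_num)
    calc l / (Real.exp l - 1) * (l ^ k * Real.exp (l / 4))
        = l ^ k * Real.exp (4⁻¹ * l) * (l / (Real.exp l - 1)) := by
          rw [show (4:ℝ)⁻¹ * l = l / 4 by ring]; ring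
      _ ≤ 2 * k.factorial * 4 ^ k := this
  refine ne_top_of_le_ne_top ?_ hb
  simp only [lintegral_const]
  exact ENNReal.mul_ne_top ENNReal.ofReal_ne_top (measure_ne_top Q _)

lemma muQ_moment (k : ℕ) :
    ∫ l, l ^ k ∂(Q.withDensity (fun l => (wnn l : ℝ≥0∞)))
      = (((k+1).factorial : ℝ)) *
        ∫ l, l ^ (k+1) / ((k+1).factorial * (Real.exp l - 1)) ∂Q := by
  rw [integral_withDensity_eq_integral_smul wnn_meas (fun l : ℝ => l ^ k)]
  have : ∫ l, wnn l • l ^ k ∂Q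
      = ∫ l, ((k+1).factorial : ℝ) * (l ^ (k+1) / ((k+1).factorial * (Real.exp l - 1))) ∂Q := by
    apply integral_congr_ae
    filter_upwards [aeQ_pos Q hQ] with l hl
    rw [NNReal.smul_def, smul_eq_mul, wnn_coe hl]
    have hfac : ((k+1).factorial : ℝ) ≠ 0 := by
      exact_mod_cast (k+1).factorial_ne_zero
    have hE : Real.exp l - 1 ≠ 0 := ne_of_gt (exp_sub_one_pos hl)
    field_simp
    ring
  rw [this, integral_const_mul]

end OneMeasure
end TruncPoisson

open TruncPoisson

/-- Identifiability of the zero-truncated Poisson mixture model: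
if two mixing distributions `Q, G` on `(0,∞)` give the same truncated mixture
probabilities `∫ λ^x/(x! (e^λ - 1)) dQ(λ)` for every integer `x ≥ 1`, then `Q = G`. -/
theorem truncated_poisson_mixture_identifiable
    (Q G : Measure ℝ) [IsProbabilityMeasure Q] [IsProbabilityMeasure G]
    (hQ : Q (Set.Ioi (0:ℝ))ᶜ = 0) (hG : G (Set.Ioi (0:ℝ))ᶜ = 0)
    (h : ∀ x : ℕ, 1 ≤ x →
      ∫ l, l ^ x / (Nat.factorial x * (Real.exp l - 1)) ∂Q =
      ∫ l, l ^ x / (Nat.factorial x * (Real.exp l - 1)) ∂G) :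
    Q = G := by
  set μ := Q.withDensity (fun l => (wnn l : ℝ≥0∞)) with hμdef
  set ν := G.withDensity (fun l => (wnn l : ℝ≥0∞)) with hνdef
  haveI : IsFiniteMeasure μ := muQ_finite Q hQ
  haveI : IsFiniteMeasure ν := muQ_finite G hG
  have hmom : ∀ k : ℕ, ∫ l, l ^ k ∂μ = ∫ l, l ^ k ∂ν := by
    intro k
    rw [hμdef, hνdef, muQ_moment Q hQ k, muQ_moment G hG k, h (k+1) (by omega)]
  have hlap := ladder μ ν (muQ_aepos Q hQ) (muQ_aepos G hG)
    (muQ_hfin Q hQ) (muQ_hfin G hG) hmom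
  have hlap' : ∀ n : ℕ, ∫ l, Real.exp (-(n:ℝ) * l) ∂μ = ∫ l, Real.exp (-(n:ℝ) * l) ∂ν := by
    intro n
    have hthis := hlap (4*n) 0
    simp only [pow_zero, one_mul] at hthis
    have hc : (((4*n : ℕ) : ℝ))/4 = (n:ℝ) := by push_cast; ring
    rwa [hc] at hthis
  set φ : ℝ → ℝ := fun l => Real.exp (-l) with hφdef
  have hφc : Continuous φ := Real.continuous_exp.comp continuous_neg
  have hφinj : Function.Injective φ := by
    intro a b hab
    have := Real.exp_eq_exp.mp hab
    linarith
  have hemb : MeasurableEmbedding φ := hφc.measurableEmbedding hφinj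
  have hsub : φ ⁻¹' (Set.Icc (0:ℝ) 1)ᶜ ⊆ (Set.Ioi (0:ℝ))ᶜ := by
    intro l hl
    simp only [Set.mem_preimage, Set.mem_compl_iff, Set.mem_Icc, Set.mem_Ioi, not_and_or,
      not_le] at hl ⊢
    intro hlpos
    rcases hl with h1 | h2
    · exact absurd (Real.exp_pos (-l)).le (not_le.mpr h1)
    · have : Real.exp (-l) ≤ 1 := Real.exp_le_one_iff.mpr (by linarith)
      linarith
  haveI : IsFiniteMeasure (Measure.map φ μ) :=
    ⟨by rw [Measure.map_apply hφc.measurable MeasurableSet.univ]; exact measure_lt_top μ _⟩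
  haveI : IsFiniteMeasure (Measure.map φ ν) :=
    ⟨by rw [Measure.map_apply hφc.measurable MeasurableSet.univ]; exact measure_lt_top ν _⟩
  have hm0 : (Measure.map φ μ) (Set.Icc (0:ℝ) 1)ᶜ = 0 := by
    rw [Measure.map_apply hφc.measurable measurableSet_Icc.compl]
    exact measure_mono_null hsub (withDensity_absolutelyContinuous Q _ hQ)
  have hm0' : (Measure.map φ ν) (Set.Icc (0:ℝ) 1)ᶜ = 0 := by
    rw [Measure.map_apply hφc.measurable measurableSet_Icc.compl]
    exact measure_mono_null hsub (withDensity_absolutelyContinuous G _ hG)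
  have hmm : ∀ n : ℕ, ∫ t, t ^ n ∂(Measure.map φ μ) = ∫ t, t ^ n ∂(Measure.map φ ν) := by
    intro n
    rw [integral_map hφc.aemeasurable (continuous_pow n).aestronglyMeasurable,
      integral_map hφc.aemeasurable (continuous_pow n).aestronglyMeasurable]
    have hpt : ∀ l : ℝ, (φ l) ^ n = Real.exp (-(n:ℝ) * l) := by
      intro l
      rw [hφdef, ← Real.exp_nat_mul]
      congr 1; ring
    simp_rw [hpt]
    exact hlap' n
  have hmeq : Measure.map φ μ = Measure.map φ ν :=
    hausdorff_moment _ _ hm0 hm0' hmm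
  have hμν : μ = ν := by
    have hc := congrArg (fun κ => Measure.comap φ κ) hmeq
    simpa [hemb.comap_map] using hc
  have hQid : μ.withDensity (fun l => ((wnn l : ℝ≥0∞))⁻¹) = Q := by
    rw [hμdef]
    apply withDensity_inv_same wnn_meas.coe_nnreal_ennreal
    · filter_upwards [aeQ_pos Q hQ] with l hl
      exact_mod_cast (ENNReal.coe_ne_zero).mpr (wnn_pos hl).ne'
    · filter_upwards with l
      exact ENNReal.coe_ne_top
  have hGid : ν.withDensity (fun l => ((wnn l : ℝ≥0∞))⁻¹) = G := by
    rw [hνdef]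
    apply withDensity_inv_same wnn_meas.coe_nnreal_ennreal
    · filter_upwards [aeQ_pos G hG] with l hl
      exact_mod_cast (ENNReal.coe_ne_zero).mpr (wnn_pos hl).ne'
    · filter_upwards with l
      exact ENNReal.coe_ne_top
  rw [← hQid, ← hGid, hμν]
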